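/- For every even n ≥ 4, setting k = (n+2)/2 (so that n+1-2k+j = j-1), we have ∑_{j=0}^{3} (j-1) C(n-j, k-j) p(j) = C(n,k) · (n+14)/(4(n-1)), and in particular this sum is positive. -/

import Mathlib

/-- The partition function: number of partitions of `n`, with `p 0 = 1`. -/
def partitionFn (n : ℕ) : ℕ := Fintype.card (Nat.Partition n)

lemma parts_le {n : ℕ} (p : Nat.Partition n) {x : ℕ} (hx : x ∈ p.parts) : x ≤ n := by
  have := Multiset.single_le_sum (fun y _ => Nat.zero_le y) x hx
  rwa [p.parts_sum] at this

lemma decomp (s : Multiset ℕ) (h : ∀ x ∈ s, x = 1 ∨ x = 2 ∨ x = 3) :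
    s = Multiset.replicate (s.count 1) 1 + Multiset.replicate (s.count 2) 2 +
      Multiset.replicate (s.count 3) 3 := by
  ext a
  simp only [Multiset.count_add, Multiset.count_replicate]
  by_cases h1 : a = 1
  · subst h1; simp
  by_cases h2 : a = 2
  · subst h2; simp
  by_cases h3 : a = 3
  · subst h3; simp
  have : a ∉ s := fun hm => by rcases h a hm with h' | h' | h' <;> simp_all
  rw [Multiset.count_eq_zero_of_notMem this]
  split_ifs <;> omega

def P2a : Nat.Partition 2 := ⟨{2}, by simp, by simp⟩
def P2b : Nat.Partition 2 := ⟨{1, 1}, by intro i hi; fin_cases hi <;> simp, by simp⟩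
def P3a : Nat.Partition 3 := ⟨{3}, by simp, by simp⟩
def P3b : Nat.Partition 3 := ⟨{1, 2}, by intro i hi; fin_cases hi <;> simp, by simp⟩
def P3c : Nat.Partition 3 := ⟨{1, 1, 1}, by intro i hi; fin_cases hi <;> simp, by simp⟩

lemma classify {n : ℕ} (hn : n ≤ 3) (p : Nat.Partition n) :
    p.parts = Multiset.replicate (p.parts.count 1) 1 + Multiset.replicate (p.parts.count 2) 2 +
      Multiset.replicate (p.parts.count 3) 3 ∧
    p.parts.count 1 + 2 * p.parts.count 2 + 3 * p.parts.count 3 = n := by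
  have hmem : ∀ x ∈ p.parts, x = 1 ∨ x = 2 ∨ x = 3 := by
    intro x hx
    have h1 := p.parts_pos hx
    have h2 := parts_le p hx
    omega
  have hd := decomp p.parts hmem
  refine ⟨hd, ?_⟩
  have := p.parts_sum
  rw [hd] at this
  simpa [Multiset.sum_replicate, mul_comm] using this

lemma partitionFn_two : partitionFn 2 = 2 := by
  have hcl : ∀ p : Nat.Partition 2, p = P2a ∨ p = P2b := by
    intro p
    obtain ⟨hd, hs⟩ := classify (by norm_num) p
    set a := p.parts.count 1
    set b := p.parts.count 2
    set c := p.parts.count 3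
    have : (a = 0 ∧ b = 1 ∧ c = 0) ∨ (a = 2 ∧ b = 0 ∧ c = 0) := by omega
    rcases this with ⟨ha, hb, hc⟩ | ⟨ha, hb, hc⟩
    · left; apply Nat.Partition.ext; rw [hd, ha, hb, hc]; rfl
    · right; apply Nat.Partition.ext; rw [hd, ha, hb, hc]; rfl
  have hne : P2a ≠ P2b := by
    intro h
    have : P2a.parts = P2b.parts := by rw [h]
    simp [P2a, P2b] at this
  have huniv : (Finset.univ : Finset (Nat.Partition 2)) = {P2a, P2b} :=
    (Finset.eq_univ_iff_forall.mpr (fun p => by simpa using hcl p)).symm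
  rw [partitionFn, ← Finset.card_univ, huniv]
  rw [Finset.card_insert_of_notMem (by simpa using hne), Finset.card_singleton]

lemma partitionFn_three : partitionFn 3 = 3 := by
  have hcl : ∀ p : Nat.Partition 3, p = P3a ∨ p = P3b ∨ p = P3c := by
    intro p
    obtain ⟨hd, hs⟩ := classify le_rfl p
    set a := p.parts.count 1
    set b := p.parts.count 2
    set c := p.parts.count 3
    have : (a = 0 ∧ b = 0 ∧ c = 1) ∨ (a = 1 ∧ b = 1 ∧ c = 0) ∨ (a = 3 ∧ b = 0 ∧ c = 0) := by omega
    rcases this with ⟨ha, hb, hc⟩ | ⟨ha, hb, hc⟩ | ⟨ha, hb, hc⟩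
    · left; apply Nat.Partition.ext; rw [hd, ha, hb, hc]; rfl
    · right; left; apply Nat.Partition.ext; rw [hd, ha, hb, hc]; rfl
    · right; right; apply Nat.Partition.ext; rw [hd, ha, hb, hc]; rfl
  have hab : P3a ≠ P3b := fun h =>
    absurd (congrArg (fun q : Nat.Partition 3 => Multiset.card q.parts) h) (by simp [P3a, P3b])
  have hac : P3a ≠ P3c := fun h =>
    absurd (congrArg (fun q : Nat.Partition 3 => Multiset.card q.parts) h) (by simp [P3a, P3c])
  have hbc : P3b ≠ P3c := fun h =>
    absurd (congrArg (fun q : Nat.Partition 3 => Multiset.card q.parts) h) (by simp [P3b, P3c])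
  have huniv : (Finset.univ : Finset (Nat.Partition 3)) = {P3a, P3b, P3c} :=
    (Finset.eq_univ_iff_forall.mpr (fun p => by simpa using hcl p)).symm
  rw [partitionFn, ← Finset.card_univ, huniv]
  rw [Finset.card_insert_of_notMem (by simp [hab, hac]),
    Finset.card_insert_of_notMem (by simpa using hbc), Finset.card_singleton]

lemma partitionFn_zero : partitionFn 0 = 1 := Fintype.card_unique
lemma partitionFn_one : partitionFn 1 = 1 := Fintype.card_unique

theorem sum_first_four_terms (n k : ℕ) (hn : 4 ≤ n) (hev : Even n) (hk : 2 * k = n + 2) :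
    (∑ j ∈ Finset.range 4,
        ((j : ℝ) - 1) * (Nat.choose (n - j) (k - j)) * partitionFn j) =
      (Nat.choose n k : ℝ) * ((n : ℝ) + 14) / (4 * ((n : ℝ) - 1)) ∧
    0 < ∑ j ∈ Finset.range 4,
        ((j : ℝ) - 1) * (Nat.choose (n - j) (k - j)) * partitionFn j := by
  obtain ⟨m, rfl⟩ : ∃ m, k = m + 3 := ⟨k - 3, by omega⟩
  obtain rfl : n = 2 * m + 4 := by omega
  have e0 : 2 * m + 4 - 0 = 2 * m + 4 := by omega
  have e2 : 2 * m + 4 - 2 = 2 * m + 2 := by omega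
  have e3 : 2 * m + 4 - 3 = 2 * m + 1 := by omega
  have f2 : m + 3 - 2 = m + 1 := by omega
  have f3 : m + 3 - 3 = m := by omega
  -- binomial identities
  have i1 : (2 * m + 4) * Nat.choose (2 * m + 3) (m + 2) = Nat.choose (2 * m + 4) (m + 3) * (m + 3) := by
    simpa using Nat.add_one_mul_choose_eq (2 * m + 3) (m + 2)
  have i2 : (2 * m + 3) * Nat.choose (2 * m + 2) (m + 1) = Nat.choose (2 * m + 3) (m + 2) * (m + 2) := by
    simpa using Nat.add_one_mul_choose_eq (2 * m + 2) (m + 1)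
  have i3 : (2 * m + 2) * Nat.choose (2 * m + 1) m = Nat.choose (2 * m + 2) (m + 1) * (m + 1) := by
    simpa using Nat.add_one_mul_choose_eq (2 * m + 1) m
  have r1 : ((2 * m + 4 : ℕ) : ℝ) * (Nat.choose (2 * m + 3) (m + 2) : ℝ) =
      (Nat.choose (2 * m + 4) (m + 3) : ℝ) * ((m : ℝ) + 3) := by exact_mod_cast congrArg Nat.cast i1
  have r2 : ((2 * m + 3 : ℕ) : ℝ) * (Nat.choose (2 * m + 2) (m + 1) : ℝ) =
      (Nat.choose (2 * m + 3) (m + 2) : ℝ) * ((m : ℝ) + 2) := by exact_mod_cast congrArg Nat.cast i2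
  have r3 : ((2 * m + 2 : ℕ) : ℝ) * (Nat.choose (2 * m + 1) m : ℝ) =
      (Nat.choose (2 * m + 2) (m + 1) : ℝ) * ((m : ℝ) + 1) := by exact_mod_cast congrArg Nat.cast i3
  push_cast at r1 r2 r3
  have hsum : (∑ j ∈ Finset.range 4,
        ((j : ℝ) - 1) * (Nat.choose (2 * m + 4 - j) (m + 3 - j)) * partitionFn j) =
      -(Nat.choose (2 * m + 4) (m + 3) : ℝ) + 2 * (Nat.choose (2 * m + 2) (m + 1) : ℝ) +
        6 * (Nat.choose (2 * m + 1) m : ℝ) := by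
    rw [Finset.sum_range_succ, Finset.sum_range_succ, Finset.sum_range_succ, Finset.sum_range_one]
    rw [e0, e2, e3, f2, f3, partitionFn_zero, partitionFn_two, partitionFn_three]
    push_cast
    ring
  have hApos : (0:ℝ) < (Nat.choose (2 * m + 4) (m + 3) : ℝ) := by
    exact_mod_cast Nat.choose_pos (show m + 3 ≤ 2 * m + 4 by omega)
  have hm0 : (0:ℝ) ≤ (m : ℝ) := Nat.cast_nonneg m
  set A := (Nat.choose (2 * m + 4) (m + 3) : ℝ)
  set B := (Nat.choose (2 * m + 2) (m + 1) : ℝ)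
  set C := (Nat.choose (2 * m + 1) m : ℝ)
  have hB : A * (m + 3) * (m + 2) = B * (2 * m + 4) * (2 * m + 3) := by
    nlinarith [r1, r2]
  have hC : B * (m + 1) = C * (2 * m + 2) := by linarith [r3]
  have hmain : -A + 2 * B + 6 * C = A * ((2 * m + 4 : ℝ) + 14) / (4 * ((2 * m + 4 : ℝ) - 1)) := by
    have hm1 : (0:ℝ) < (m : ℝ) + 1 := by positivity
    have hd : (4 * ((2 * (m:ℝ) + 4) - 1)) ≠ 0 := by nlinarith
    rw [eq_div_iff hd]
    nlinarith [hB, hC, hm1]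
  constructor
  · rw [hsum]; push_cast; push_cast at hmain; convert hmain using 2 <;> ring
  · rw [hsum]
    have : -A + 2 * B + 6 * C > 0 := by
      rw [hmain]
      exact div_pos (mul_pos hApos (by linarith)) (by linarith)
    linarith
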